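/- Let K be a field and let C be a connected graded K-algebra generated in degree 1 that is the internal direct sum C = A ⊓ B of graded subalgebras A and B. Suppose that A and B are universally Koszul in the sense that for every left ideal generated in degree 1 of A (resp. of B) and every degree-one element of A (resp. B) not lying in it, the corresponding colon ideal in A (resp. in B) is again generated in degree 1. Then C has the same property: for every left ideal I of C generated in degree 1 and every x ∈ C_1 \ I, the colon ideal I : x is generated in degree 1. In particular C is universally Koszul. -/
import Mathlib


/-- The colon ideal `I : x = {a | a * x ∈ I}` of a left ideal `I` by an element `x`. -/
def colonIdeal {A : Type*} [Ring A] (I : Ideal A) (x : A) : Ideal A :=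
  Submodule.comap (LinearMap.toSpanSingleton A A x) I

/-- A left ideal is generated in degree 1, i.e. generated by a subset of the
degree-one component `D`. -/
def GenInDeg1 {A : Type*} [Ring A] (D : Set A) (I : Ideal A) : Prop :=
  ∃ S ⊆ D, I = Ideal.span S

set_option linter.unusedSectionVars false
set_option linter.unusedVariables false
set_option maxHeartbeats 1000000

open DirectSum

section UKHelpers
variable {K C : Type*} [Field K] [Ring C] [Algebra K C]
variable (𝒞 : ℕ → Submodule K C) [GradedAlgebra 𝒞]
variable [∀ (i : ℕ) (x : 𝒞 i), Decidable (x ≠ 0)]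

/-- Homogeneous products of degree `m`: elements `d * s` with `d` of degree `m-1`
and `s` in `S0`. -/
def homProd (S0 : Set C) (m : ℕ) : Set C :=
  {c | ∃ d, d ∈ 𝒞 (m - 1) ∧ ∃ s ∈ S0, c = d * s}

lemma decompose_mul_sum (c z : C) (m : ℕ) :
    ((DirectSum.decompose 𝒞 (c * z) m : 𝒞 m) : C)
      = ∑ i ∈ (DirectSum.decompose 𝒞 c).support,
          ((DirectSum.decompose 𝒞 (((DirectSum.decompose 𝒞 c i : 𝒞 i) : C) * z) m : 𝒞 m) : C) := by
  have hcz : c * z = ∑ i ∈ (DirectSum.decompose 𝒞 c).support,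
      (((DirectSum.decompose 𝒞 c i : 𝒞 i) : C) * z) := by
    rw [← Finset.sum_mul, DirectSum.sum_support_decompose]
  calc ((DirectSum.decompose 𝒞 (c * z) m : 𝒞 m) : C)
      = GradedAlgebra.proj 𝒞 m (c * z) := (GradedAlgebra.proj_apply 𝒞 m (c*z)).symm
    _ = ∑ i ∈ (DirectSum.decompose 𝒞 c).support,
          GradedAlgebra.proj 𝒞 m (((DirectSum.decompose 𝒞 c i : 𝒞 i) : C) * z) := by
        rw [hcz, map_sum]
    _ = _ := by simp [GradedAlgebra.proj_apply]

lemma mul_homProd_mem (S0 : Set C) {i j : ℕ} (hj : 1 ≤ j) {d0 : C} (hd0 : d0 ∈ 𝒞 i) {p : C}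
    (hp : p ∈ Submodule.span K (homProd 𝒞 S0 j)) :
    d0 * p ∈ Submodule.span K (homProd 𝒞 S0 (i + j)) := by
  induction hp using Submodule.span_induction with
  | mem s hs =>
    obtain ⟨d, hd, s', hs', rfl⟩ := hs
    refine Submodule.subset_span ⟨d0 * d, ?_, s', hs', (mul_assoc _ _ _).symm⟩
    have : i + (j - 1) = i + j - 1 := by omega
    exact this ▸ SetLike.mul_mem_graded hd0 hd
  | zero => rw [mul_zero]; exact zero_mem _
  | add p q _ _ hp hq => rw [mul_add]; exact add_mem hp hq
  | smul k p _ hp => rw [mul_smul_comm]; exact Submodule.smul_mem _ _ hp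

lemma grad_span (S0 : Set C) (hS0 : S0 ⊆ ((𝒞 1 : Submodule K C) : Set C)) {z : C}
    (hz : z ∈ Ideal.span S0) :
    ((DirectSum.decompose 𝒞 z 0 : 𝒞 0) : C) = 0 ∧
      ∀ m, 1 ≤ m → ((DirectSum.decompose 𝒞 z m : 𝒞 m) : C) ∈
        Submodule.span K (homProd 𝒞 S0 m) := by
  induction hz using Submodule.span_induction with
  | mem s hs =>
    constructor
    · exact DirectSum.decompose_of_mem_ne 𝒞 (hS0 hs) one_ne_zero
    · intro m hm
      rcases eq_or_lt_of_le hm with h1 | h2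
      · subst h1
        have : ((DirectSum.decompose 𝒞 s 1 : 𝒞 1) : C) = s :=
          DirectSum.decompose_of_mem_same 𝒞 (hS0 hs)
        rw [this]
        exact Submodule.subset_span ⟨1, by simpa using SetLike.one_mem_graded (A := 𝒞), s, hs, (one_mul s).symm⟩
      · have : ((DirectSum.decompose 𝒞 s m : 𝒞 m) : C) = 0 :=
          DirectSum.decompose_of_mem_ne 𝒞 (hS0 hs) (by omega)
        rw [this]; exact zero_mem _
  | zero => simp
  | add p q _ _ hp hq =>
    refine ⟨by rw [DirectSum.decompose_add]; simp [hp.1, hq.1], fun m hm => ?_⟩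
    rw [DirectSum.decompose_add]
    simpa using add_mem (hp.2 m hm) (hq.2 m hm)
  | smul c z hzmem hz =>
    rw [smul_eq_mul]
    constructor
    · rw [decompose_mul_sum]
      refine Finset.sum_eq_zero fun i hi => ?_
      by_cases hle : i ≤ 0
      · interval_cases i
        rw [DirectSum.coe_decompose_mul_of_left_mem_of_le 𝒞
          (SetLike.coe_mem (DirectSum.decompose 𝒞 c 0)) (le_refl 0)]
        simp [hz.1]
      · exact DirectSum.coe_decompose_mul_of_left_mem_of_not_le 𝒞
          (SetLike.coe_mem (DirectSum.decompose 𝒞 c i)) hle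
    · intro m hm
      rw [decompose_mul_sum]
      refine Submodule.sum_mem _ fun i hi => ?_
      by_cases hle : i ≤ m
      · rw [DirectSum.coe_decompose_mul_of_left_mem_of_le 𝒞
          (SetLike.coe_mem (DirectSum.decompose 𝒞 c i)) hle]
        by_cases hmi : 1 ≤ m - i
        · have := mul_homProd_mem 𝒞 S0 hmi (SetLike.coe_mem (DirectSum.decompose 𝒞 c i))
            (hz.2 (m - i) hmi)
          have him : i + (m - i) = m := by omega
          rwa [him] at this
        · have h0 : m - i = 0 := by omega
          rw [h0, hz.1, mul_zero]; exact zero_mem _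
      · rw [DirectSum.coe_decompose_mul_of_left_mem_of_not_le 𝒞
          (SetLike.coe_mem (DirectSum.decompose 𝒞 c i)) hle]
        exact zero_mem _

lemma spanK_le_ideal (S0 : Set C) {v : C} (hv : v ∈ Submodule.span K S0) :
    v ∈ Ideal.span S0 := by
  have : Submodule.span K S0 ≤ (Ideal.span S0).restrictScalars K :=
    Submodule.span_le.mpr Ideal.subset_span
  exact this hv

lemma genLem (T : Set C) (hT : T ⊆ ((𝒞 1 : Submodule K C) : Set C)) {u : C}
    (hu : u ∈ Algebra.adjoin K T) (h0 : ((DirectSum.decompose 𝒞 u 0 : 𝒞 0) : C) = 0) :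
    u ∈ Ideal.span T := by
  have hM : ∀ y ∈ Algebra.adjoin K T,
      y ∈ Submodule.span K {(1 : C)} ⊔ (Ideal.span T).restrictScalars K := by
    intro y hy
    induction hy using Algebra.adjoin_induction with
    | mem t ht => exact Submodule.mem_sup_right (Ideal.subset_span ht)
    | algebraMap r =>
      apply Submodule.mem_sup_left
      rw [Algebra.algebraMap_eq_smul_one]
      exact Submodule.smul_mem _ _ (Submodule.mem_span_singleton_self 1)
    | add p q _ _ hp hq => exact add_mem hp hq
    | mul p q _ _ hp hq =>
      obtain ⟨p1, hp1, p2, hp2, rfl⟩ := Submodule.mem_sup.mp hp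
      obtain ⟨q1, hq1, q2, hq2, rfl⟩ := Submodule.mem_sup.mp hq
      obtain ⟨α, rfl⟩ := Submodule.mem_span_singleton.mp hp1
      obtain ⟨β, rfl⟩ := Submodule.mem_span_singleton.mp hq1
      have expand : (α • (1:C) + p2) * (β • (1:C) + q2)
          = (α * β) • (1:C) + (α • q2 + (β • p2 + p2 * q2)) := by
        rw [add_mul, mul_add, mul_add]
        rw [smul_mul_assoc, smul_mul_assoc, mul_smul_comm, mul_smul_comm]
        simp [mul_one, one_mul, smul_smul]
        abel
      rw [expand]
      refine Submodule.mem_sup.mpr ⟨(α*β) • 1, Submodule.smul_mem _ _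
        (Submodule.mem_span_singleton_self 1), _, ?_, rfl⟩
      refine add_mem (Submodule.smul_mem _ _ hq2) (add_mem (Submodule.smul_mem _ _ hp2) ?_)
      show p2 * q2 ∈ Ideal.span T
      have := Submodule.smul_mem (Ideal.span T) p2 hq2
      rwa [smul_eq_mul] at this
  obtain ⟨y1, hy1, y2, hy2, heq⟩ := Submodule.mem_sup.mp (hM u hu)
  obtain ⟨α, rfl⟩ := Submodule.mem_span_singleton.mp hy1
  have h20 : ((DirectSum.decompose 𝒞 y2 0 : 𝒞 0) : C) = 0 :=
    (grad_span 𝒞 T hT hy2).1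
  have h10 : ((DirectSum.decompose 𝒞 (1:C) 0 : 𝒞 0) : C) = 1 :=
    DirectSum.decompose_of_mem_same 𝒞 (SetLike.one_mem_graded _)
  have hdec : ((DirectSum.decompose 𝒞 (α • (1:C) + y2) 0 : 𝒞 0) : C)
      = α • ((DirectSum.decompose 𝒞 (1:C) 0 : 𝒞 0) : C)
        + ((DirectSum.decompose 𝒞 y2 0 : 𝒞 0) : C) := by
    rw [DirectSum.decompose_add, DirectSum.decompose_smul]
    simp [DFinsupp.smul_apply]
    rfl
  rw [← heq] at h0
  rw [hdec, h10, h20, add_zero] at h0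
  rw [← heq, h0, zero_add]
  exact hy2

lemma Igraded (S0 : Set C) (hS0 : S0 ⊆ ((𝒞 1 : Submodule K C) : Set C)) {z : C}
    (hz : z ∈ Ideal.span S0) (m : ℕ) :
    ((DirectSum.decompose 𝒞 z m : 𝒞 m) : C) ∈ Ideal.span S0 := by
  rcases Nat.eq_zero_or_pos m with rfl | hm
  · rw [(grad_span 𝒞 S0 hS0 hz).1]; exact zero_mem _
  · have h := (grad_span 𝒞 S0 hS0 hz).2 m hm
    have hle : Submodule.span K (homProd 𝒞 S0 m) ≤ (Ideal.span S0).restrictScalars K := by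
      refine Submodule.span_le.mpr ?_
      rintro _ ⟨d, hd, s, hs, rfl⟩
      have := Submodule.smul_mem (Ideal.span S0) d (Ideal.subset_span hs)
      rwa [smul_eq_mul] at this
    exact hle h

section TwoAlg
variable (SA SB : Subalgebra K C) (S : Set C)

def deg1part (SX : Subalgebra K C) : Submodule K C := Subalgebra.toSubmodule SX ⊓ 𝒞 1

def Vpart : Submodule K C :=
  deg1part 𝒞 SA ⊓ (Submodule.span K S ⊔ deg1part 𝒞 SB)

def prodSet (n : ℕ) : Set C :=
  {c | ∃ u, u ∈ SA ∧ u ∈ 𝒞 n ∧ ∃ a ∈ Vpart 𝒞 SA SB S, c = u * a}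

lemma zero_comp {c : C} {n : ℕ} (hc : c ∈ 𝒞 n) (hn : 1 ≤ n) :
    ((DirectSum.decompose 𝒞 c 0 : 𝒞 0) : C) = 0 :=
  DirectSum.decompose_of_mem_ne 𝒞 hc (by omega)

lemma uaI
    (hann : ∀ u ∈ SA, ∀ w ∈ SB,
      ((DirectSum.decompose 𝒞 u 0 : 𝒞 0) : C) = 0 →
      ((DirectSum.decompose 𝒞 w 0 : 𝒞 0) : C) = 0 → u * w = 0 ∧ w * u = 0)
    {u a : C} (hu : u ∈ SA) (hu0 : ((DirectSum.decompose 𝒞 u 0 : 𝒞 0) : C) = 0)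
    (ha : a ∈ Vpart 𝒞 SA SB S) : u * a ∈ Ideal.span S := by
  obtain ⟨v, hv, b, hb, heq⟩ := Submodule.mem_sup.mp ha.2
  have hb0 : ((DirectSum.decompose 𝒞 b 0 : 𝒞 0) : C) = 0 := zero_comp 𝒞 hb.2 le_rfl
  have hub : u * b = 0 := (hann u hu b hb.1 hu0 hb0).1
  have : u * a = u * v := by rw [← heq, mul_add, hub, add_zero]
  rw [this]
  have := Submodule.smul_mem (Ideal.span S) u (spanK_le_ideal S hv)
  rwa [smul_eq_mul] at this

lemma splitI (hS : S ⊆ ((𝒞 1 : Submodule K C) : Set C))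
    (hann : ∀ u ∈ SA, ∀ w ∈ SB,
      ((DirectSum.decompose 𝒞 u 0 : 𝒞 0) : C) = 0 →
      ((DirectSum.decompose 𝒞 w 0 : 𝒞 0) : C) = 0 → u * w = 0 ∧ w * u = 0)
    (hsum : ∀ n, 1 ≤ n →
      𝒞 n = (Subalgebra.toSubmodule SA ⊓ 𝒞 n) ⊔ (Subalgebra.toSubmodule SB ⊓ 𝒞 n))
    {y : C} {m : ℕ} (hy : y ∈ Ideal.span S) (hym : y ∈ 𝒞 m) (hm : 2 ≤ m) :
    ∃ p ∈ Submodule.span K (prodSet 𝒞 SA SB S (m-1)),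
      ∃ q ∈ Submodule.span K (prodSet 𝒞 SB SA S (m-1)), y = p + q := by
  have hy2 := (grad_span 𝒞 S hS hy).2 m (by omega)
  rw [DirectSum.decompose_of_mem_same 𝒞 hym] at hy2
  have hle : Submodule.span K (homProd 𝒞 S m) ≤
      Submodule.span K (prodSet 𝒞 SA SB S (m-1)) ⊔
        Submodule.span K (prodSet 𝒞 SB SA S (m-1)) := by
    refine Submodule.span_le.mpr ?_
    rintro _ ⟨d, hd, s, hs, rfl⟩
    obtain ⟨u, hu, w, hw, hdeq⟩ := Submodule.mem_sup.mp ((hsum (m-1) (by omega)) ▸ hd)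
    obtain ⟨a, ha, b, hb, hseq⟩ := Submodule.mem_sup.mp ((hsum 1 le_rfl) ▸ (hS hs))
    have haV : a ∈ Vpart 𝒞 SA SB S := by
      refine ⟨ha, Submodule.mem_sup.mpr ⟨s, Submodule.subset_span hs, -b, neg_mem hb, ?_⟩⟩
      rw [← hseq]; abel
    have hbV : b ∈ Vpart 𝒞 SB SA S := by
      refine ⟨hb, Submodule.mem_sup.mpr ⟨s, Submodule.subset_span hs, -a, neg_mem ha, ?_⟩⟩
      rw [← hseq]; abel
    have hu0 : ((DirectSum.decompose 𝒞 u 0 : 𝒞 0) : C) = 0 := zero_comp 𝒞 hu.2 (by omega)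
    have hw0 : ((DirectSum.decompose 𝒞 w 0 : 𝒞 0) : C) = 0 := zero_comp 𝒞 hw.2 (by omega)
    have ha0 : ((DirectSum.decompose 𝒞 a 0 : 𝒞 0) : C) = 0 := zero_comp 𝒞 ha.2 le_rfl
    have hb0 : ((DirectSum.decompose 𝒞 b 0 : 𝒞 0) : C) = 0 := zero_comp 𝒞 hb.2 le_rfl
    have hub : u * b = 0 := (hann u hu.1 b hb.1 hu0 hb0).1
    have hwa : w * a = 0 := (hann a ha.1 w hw.1 ha0 hw0).2
    have hds : d * s = u * a + w * b := by
      rw [← hdeq, ← hseq, add_mul, mul_add, mul_add, hub, hwa]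
      abel
    rw [hds]
    exact Submodule.add_mem_sup
      (Submodule.subset_span ⟨u, hu.1, hu.2, a, haV, rfl⟩)
      (Submodule.subset_span ⟨w, hw.1, hw.2, b, hbV, rfl⟩)
  obtain ⟨p, hp, q, hq, heq⟩ := Submodule.mem_sup.mp (hle hy2)
  exact ⟨p, hp, q, hq, heq.symm⟩

lemma prodSet_le (n : ℕ) (hn : 1 ≤ n) :
    Submodule.span K (prodSet 𝒞 SA SB S n) ≤ Subalgebra.toSubmodule SA ⊓ 𝒞 (n+1) := by
  refine Submodule.span_le.mpr ?_
  rintro _ ⟨u, huA, hun, a, haV, rfl⟩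
  exact ⟨SA.mul_mem huA haV.1.1, SetLike.mul_mem_graded hun haV.1.2⟩

lemma extract
    (hdisj : ∀ n, 1 ≤ n →
      (Subalgebra.toSubmodule SA ⊓ 𝒞 n) ⊓ (Subalgebra.toSubmodule SB ⊓ 𝒞 n) = ⊥)
    {m : ℕ} (hm : 2 ≤ m) {u w p q : C}
    (hu : u ∈ Subalgebra.toSubmodule SA ⊓ 𝒞 m) (hw : w ∈ Subalgebra.toSubmodule SB ⊓ 𝒞 m)
    (hp : p ∈ Submodule.span K (prodSet 𝒞 SA SB S (m-1)))
    (hq : q ∈ Submodule.span K (prodSet 𝒞 SB SA S (m-1)))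
    (heq : u + w = p + q) : u = p ∧ w = q := by
  have hp' : p ∈ Subalgebra.toSubmodule SA ⊓ 𝒞 m := by
    have := prodSet_le 𝒞 SA SB S (m-1) (by omega) hp
    have hmm : m - 1 + 1 = m := by omega
    rwa [hmm] at this
  have hq' : q ∈ Subalgebra.toSubmodule SB ⊓ 𝒞 m := by
    have := prodSet_le 𝒞 SB SA S (m-1) (by omega) hq
    have hmm : m - 1 + 1 = m := by omega
    rwa [hmm] at this
  have hupqw : u - p = q - w := by
    rw [sub_eq_sub_iff_add_eq_add, heq]; exact add_comm p q
  have hz : u - p ∈ (Subalgebra.toSubmodule SA ⊓ 𝒞 m) ⊓ (Subalgebra.toSubmodule SB ⊓ 𝒞 m) :=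
    ⟨sub_mem hu hp', hupqw ▸ sub_mem hq' hw⟩
  rw [hdisj m (by omega)] at hz
  have hup : u = p := sub_eq_zero.mp ((Submodule.mem_bot _).mp hz)
  refine ⟨hup, ?_⟩
  have := heq
  rw [hup] at this
  exact add_left_cancel this

end TwoAlg

lemma sideA (SA SB : Subalgebra K C) (S : Set C)
    (hconn : 𝒞 0 = 1)
    (hS : S ⊆ ((𝒞 1 : Submodule K C) : Set C))
    (hann : ∀ u ∈ SA, ∀ w ∈ SB,
      ((DirectSum.decompose 𝒞 u 0 : 𝒞 0) : C) = 0 →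
      ((DirectSum.decompose 𝒞 w 0 : 𝒞 0) : C) = 0 → u * w = 0 ∧ w * u = 0)
    (hsum1 : 𝒞 1 = (Subalgebra.toSubmodule SA ⊓ 𝒞 1) ⊔ (Subalgebra.toSubmodule SB ⊓ 𝒞 1))
    (hA : ∀ I : Ideal SA, GenInDeg1 {y : SA | (y : C) ∈ 𝒞 1} I →
      ∀ x : SA, (x : C) ∈ 𝒞 1 → x ∉ I →
        GenInDeg1 {y : SA | (y : C) ∈ 𝒞 1} (colonIdeal I x))
    {xc : C} (hxcA : xc ∈ SA) (hxc1 : xc ∈ 𝒞 1) (hxcV : xc ∉ Vpart 𝒞 SA SB S)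
    {u : C} (huA : u ∈ SA) {n : ℕ}
    (hmem : u * xc ∈ Submodule.span K (prodSet 𝒞 SA SB S n)) :
    u ∈ Ideal.span {c : C | c ∈ SA ∧ c ∈ 𝒞 1 ∧ c * xc ∈ Ideal.span S} := by
  classical
  set TA : Set SA := {y : SA | (y : C) ∈ Vpart 𝒞 SA SB S} with hTA
  set JA : Ideal SA := Ideal.span TA with hJA
  have hVle1 : (Vpart 𝒞 SA SB S : Set C) ⊆ ((𝒞 1 : Submodule K C) : Set C) :=
    fun c hc => hc.1.2
  have hTAdeg : TA ⊆ {y : SA | (y : C) ∈ 𝒞 1} := fun y hy => hVle1 hy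
  -- image of JA in C lies in the span of Vpart
  have hspanJA : ∀ j : SA, j ∈ JA → (j : C) ∈ Ideal.span ((Vpart 𝒞 SA SB S : Submodule K C) : Set C) := by
    intro j hj
    have h1 : (j : C) ∈ Ideal.map (SA.val.toRingHom) JA :=
      Ideal.mem_map_of_mem _ hj
    rw [hJA, Ideal.map_span] at h1
    refine Ideal.span_mono ?_ h1
    rintro _ ⟨y, hy, rfl⟩
    exact hy
  -- degree one part of JA is Vpart
  have hdeg1JA : ∀ j : SA, j ∈ JA → (j : C) ∈ 𝒞 1 → (j : C) ∈ Vpart 𝒞 SA SB S := by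
    intro j hj hj1
    have h := (grad_span 𝒞 (Vpart 𝒞 SA SB S : Submodule K C) hVle1 (hspanJA j hj)).2 1 le_rfl
    rw [DirectSum.decompose_of_mem_same 𝒞 hj1] at h
    refine (Submodule.span_le.mpr ?_ : Submodule.span K (homProd 𝒞 (Vpart 𝒞 SA SB S : Submodule K C) 1) ≤ Vpart 𝒞 SA SB S) h
    rintro _ ⟨d, hd, s, hs, rfl⟩
    have hd0 : d ∈ (1 : Submodule K C) := by rw [← hconn]; exact hd
    obtain ⟨r, hr⟩ := Submodule.mem_one.mp hd0
    rw [← hr, ← Algebra.smul_def]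
    exact Submodule.smul_mem _ _ hs
  have hxcJA : (⟨xc, hxcA⟩ : SA) ∉ JA := fun h => hxcV (hdeg1JA _ h hxc1)
  -- u * xc lands in the image of JA
  set M : Submodule K C := Submodule.map (SA.val.toLinearMap) (JA.restrictScalars K) with hM
  have hPJ : Submodule.span K (prodSet 𝒞 SA SB S n) ≤ M := by
    refine Submodule.span_le.mpr ?_
    rintro _ ⟨u', hu'A, hu'n, a, haV, rfl⟩
    refine ⟨(⟨u', hu'A⟩ : SA) * ⟨a, haV.1.1⟩, ?_, rfl⟩
    have : (⟨a, haV.1.1⟩ : SA) ∈ JA := Ideal.subset_span haV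
    have h2 := Submodule.smul_mem JA (⟨u', hu'A⟩ : SA) this
    rwa [smul_eq_mul] at h2
  obtain ⟨j, hjJA, hjeq⟩ := hPJ hmem
  have hjmul : (⟨u, huA⟩ * ⟨xc, hxcA⟩ : SA) ∈ JA := by
    have : (⟨u, huA⟩ * ⟨xc, hxcA⟩ : SA) = j := Subtype.ext (by
      simpa using hjeq.symm)
    rw [this]; exact hjJA
  have hcolon : (⟨u, huA⟩ : SA) ∈ colonIdeal JA ⟨xc, hxcA⟩ := by
    show (⟨u, huA⟩ : SA) ∈ Submodule.comap _ _
    rw [Submodule.mem_comap, LinearMap.toSpanSingleton_apply, smul_eq_mul]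
    exact hjmul
  obtain ⟨T, hT, hcoleq⟩ := hA JA ⟨TA, hTAdeg, hJA⟩ ⟨xc, hxcA⟩ hxc1 hxcJA
  rw [hcoleq] at hcolon
  have huC : (u : C) ∈ Ideal.span (Subtype.val '' T) := by
    have h1 := Ideal.mem_map_of_mem (SA.val.toRingHom) hcolon
    rwa [Ideal.map_span] at h1
  refine Ideal.span_mono ?_ huC
  rintro _ ⟨t, ht, rfl⟩
  refine ⟨SetLike.coe_mem t, hT ht, ?_⟩
  -- t * xc lies in the ideal I
  have htc : t * (⟨xc, hxcA⟩ : SA) ∈ JA := by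
    have h1 : t ∈ colonIdeal JA ⟨xc, hxcA⟩ := by
      rw [hcoleq]; exact Ideal.subset_span ht
    rw [colonIdeal, Submodule.mem_comap, LinearMap.toSpanSingleton_apply, smul_eq_mul] at h1
    exact h1
  have htc2 : (t : C) * xc ∈ 𝒞 2 := SetLike.mul_mem_graded (hT ht) hxc1
  have htcJ : (t : C) * xc ∈ Ideal.span ((Vpart 𝒞 SA SB S : Submodule K C) : Set C) := by
    have := hspanJA _ htc
    simpa using this
  have h := (grad_span 𝒞 (Vpart 𝒞 SA SB S : Submodule K C) hVle1 htcJ).2 2 (by omega)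
  rw [DirectSum.decompose_of_mem_same 𝒞 htc2] at h
  refine (Submodule.span_le.mpr ?_ :
    Submodule.span K (homProd 𝒞 (Vpart 𝒞 SA SB S : Submodule K C) 2) ≤
      (Ideal.span S).restrictScalars K) h
  rintro _ ⟨d, hd, s, hs, rfl⟩
  -- d ∈ 𝒞 1, s ∈ Vpart
  obtain ⟨da, hda, db, hdb, hdeq⟩ := Submodule.mem_sup.mp ((hsum1) ▸ (show d ∈ 𝒞 1 from hd))
  have hs0 : ((DirectSum.decompose 𝒞 s 0 : 𝒞 0) : C) = 0 := zero_comp 𝒞 (hVle1 hs) le_rfl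
  have hdb0 : ((DirectSum.decompose 𝒞 db 0 : 𝒞 0) : C) = 0 := zero_comp 𝒞 hdb.2 le_rfl
  have hda0 : ((DirectSum.decompose 𝒞 da 0 : 𝒞 0) : C) = 0 := zero_comp 𝒞 hda.2 le_rfl
  have hdbs : db * s = 0 := (hann s (hs.1.1) db hdb.1 hs0 hdb0).2
  have hds : d * s = da * s := by rw [← hdeq, add_mul, hdbs, add_zero]
  rw [hds]
  exact uaI 𝒞 SA SB S hann hda.1 hda0 hs

end UKHelpers

/-- Let `C` be a connected graded `K`-algebra generated in degree 1
which is the internal direct sum `C = A ⊓ B` of graded subalgebras `A` and `B`, each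
generated in degree 1, with `C_n = A_n ⊕ B_n` for `n ≥ 1` and `A_+·B_+ = B_+·A_+ = 0`.
If `A` and `B` are universally Koszul (colon ideals of ideals generated in degree 1 by
degree-one elements outside them are again generated in degree 1), then so is `C`. -/
theorem stmt4 {K C : Type*} [Field K] [Ring C] [Algebra K C]
    (𝒞 : ℕ → Submodule K C) [GradedAlgebra 𝒞]
    (hconn : 𝒞 0 = 1)
    (hgen : Algebra.adjoin K ((𝒞 1 : Submodule K C) : Set C) = ⊤)
    (SA SB : Subalgebra K C)
    -- `A` and `B` are graded subalgebras (closed under homogeneous components)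
    (hAhom : ∀ y ∈ SA, ∀ n : ℕ, ((DirectSum.decompose 𝒞 y n : 𝒞 n) : C) ∈ SA)
    (hBhom : ∀ y ∈ SB, ∀ n : ℕ, ((DirectSum.decompose 𝒞 y n : 𝒞 n) : C) ∈ SB)
    -- each generated in degree 1
    (hAgen : Algebra.adjoin K ((SA : Set C) ∩ ((𝒞 1 : Submodule K C) : Set C)) = SA)
    (hBgen : Algebra.adjoin K ((SB : Set C) ∩ ((𝒞 1 : Submodule K C) : Set C)) = SB)
    -- `C_n = A_n ⊕ B_n` for all `n ≥ 1`
    (hsum : ∀ n, 1 ≤ n →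
      𝒞 n = (Subalgebra.toSubmodule SA ⊓ 𝒞 n) ⊔ (Subalgebra.toSubmodule SB ⊓ 𝒞 n))
    (hdisj : ∀ n, 1 ≤ n →
      (Subalgebra.toSubmodule SA ⊓ 𝒞 n) ⊓ (Subalgebra.toSubmodule SB ⊓ 𝒞 n) = ⊥)
    -- `a·b = b·a = 0` for all `a ∈ A_+` and `b ∈ B_+`
    (hann : ∀ u ∈ SA, ∀ w ∈ SB,
      ((DirectSum.decompose 𝒞 u 0 : 𝒞 0) : C) = 0 →
      ((DirectSum.decompose 𝒞 w 0 : 𝒞 0) : C) = 0 → u * w = 0 ∧ w * u = 0)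
    -- `A` is universally Koszul
    (hA : ∀ I : Ideal SA, GenInDeg1 {y : SA | (y : C) ∈ 𝒞 1} I →
      ∀ x : SA, (x : C) ∈ 𝒞 1 → x ∉ I →
        GenInDeg1 {y : SA | (y : C) ∈ 𝒞 1} (colonIdeal I x))
    -- `B` is universally Koszul
    (hB : ∀ I : Ideal SB, GenInDeg1 {y : SB | (y : C) ∈ 𝒞 1} I →
      ∀ x : SB, (x : C) ∈ 𝒞 1 → x ∉ I →
        GenInDeg1 {y : SB | (y : C) ∈ 𝒞 1} (colonIdeal I x)) :
    ∀ I : Ideal C, GenInDeg1 ((𝒞 1 : Submodule K C) : Set C) I →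
      ∀ x ∈ 𝒞 1, x ∉ I →
        GenInDeg1 ((𝒞 1 : Submodule K C) : Set C) (colonIdeal I x) := by
  classical
  intro I hI x hx1 hxI
  obtain ⟨S, hS, rfl⟩ := hI
  set S' : Set C := {c | c ∈ ((𝒞 1 : Submodule K C) : Set C) ∧ c * x ∈ Ideal.span S} with hS'def
  have colon_mem : ∀ z : C, z ∈ colonIdeal (Ideal.span S) x ↔ z * x ∈ Ideal.span S := by
    intro z
    rw [colonIdeal, Submodule.mem_comap, LinearMap.toSpanSingleton_apply, smul_eq_mul]
  have mulI : ∀ (c y : C), y ∈ Ideal.span S → c * y ∈ Ideal.span S := fun c y hy => by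
    simpa [smul_eq_mul] using Submodule.smul_mem (Ideal.span S) c hy
  refine ⟨S', fun c hc => hc.1, ?_⟩
  refine le_antisymm ?_ (Ideal.span_le.mpr fun c hc => (colon_mem c).mpr hc.2)
  -- common data
  have hannBA : ∀ u ∈ SB, ∀ w ∈ SA,
      ((DirectSum.decompose 𝒞 u 0 : 𝒞 0) : C) = 0 →
      ((DirectSum.decompose 𝒞 w 0 : 𝒞 0) : C) = 0 → u * w = 0 ∧ w * u = 0 :=
    fun u hu w hw h1 h2 => ⟨(hann w hw u hu h2 h1).2, (hann w hw u hu h2 h1).1⟩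
  have hsum1 := hsum 1 le_rfl
  have hsum1B : 𝒞 1 = (Subalgebra.toSubmodule SB ⊓ 𝒞 1) ⊔ (Subalgebra.toSubmodule SA ⊓ 𝒞 1) :=
    hsum1.trans (sup_comm _ _)
  obtain ⟨xa, hxa, xb, hxb, hxeq⟩ := Submodule.mem_sup.mp
    (show x ∈ (Subalgebra.toSubmodule SA ⊓ 𝒞 1) ⊔ (Subalgebra.toSubmodule SB ⊓ 𝒞 1) by
      rw [← hsum1]; exact hx1)
  have n1case : ∀ z' ∈ 𝒞 1, z' * x ∈ Ideal.span S → z' ∈ Ideal.span S' :=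
    fun z' h1 h2 => Ideal.subset_span ⟨h1, h2⟩
  -- terminal case
  have termKey : ∀ a2 ∈ Vpart 𝒞 SA SB S, x - a2 ∈ Ideal.span S →
      ∀ n, 1 ≤ n → ∀ z' ∈ 𝒞 n, z' * x ∈ Ideal.span S → z' ∈ Ideal.span S' := by
    intro a2 ha2 hxa2 n hn z' hz' _
    have hadj : z' ∈ Algebra.adjoin K ((𝒞 1 : Submodule K C) : Set C) := by
      rw [hgen]; trivial
    have h1 : z' ∈ Ideal.span ((𝒞 1 : Submodule K C) : Set C) :=
      genLem 𝒞 _ (fun c hc => hc) hadj (zero_comp 𝒞 hz' hn)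
    refine Ideal.span_mono ?_ h1
    intro c hc
    refine ⟨hc, ?_⟩
    obtain ⟨ca, hca, cb, hcb, hceq⟩ := Submodule.mem_sup.mp
      (show c ∈ _ ⊔ _ by rw [← hsum1]; exact hc)
    have hcb2 : cb * a2 = 0 := (hann a2 ha2.1.1 cb hcb.1
      (zero_comp 𝒞 ha2.1.2 le_rfl) (zero_comp 𝒞 hcb.2 le_rfl)).2
    have hca2 : ca * a2 ∈ Ideal.span S :=
      uaI 𝒞 SA SB S hann hca.1 (zero_comp 𝒞 hca.2 le_rfl) ha2
    have h5 : c * a2 = ca * a2 + cb * a2 := by rw [← hceq, add_mul]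
    have hcx : c * x = c * a2 + c * (x - a2) := by rw [mul_sub]; abel
    rw [hcx, h5]
    exact add_mem (add_mem hca2 (by rw [hcb2]; exact zero_mem _)) (mulI _ _ hxa2)
  -- case 2a: x = v + b' with b' pure B, not in VB
  have key2a : ∀ v b', v ∈ Submodule.span K S → b' ∈ Subalgebra.toSubmodule SB ⊓ 𝒞 1 →
      b' ∉ Vpart 𝒞 SB SA S → x = v + b' →
      ∀ n, 1 ≤ n → ∀ z' ∈ 𝒞 n, z' * x ∈ Ideal.span S → z' ∈ Ideal.span S' := by
    intro v b' hv hb' hb'V hxeq' n hn z' hz'n hz'x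
    rcases eq_or_lt_of_le hn with h1 | h2
    · exact n1case z' (h1 ▸ hz'n) hz'x
    · obtain ⟨u, hu, w, hw, hzeq⟩ := Submodule.mem_sup.mp
        (show z' ∈ _ ⊔ _ by rw [← hsum n hn]; exact hz'n)
      have hu0 := zero_comp 𝒞 hu.2 hn
      have hb'0 := zero_comp 𝒞 hb'.2 le_rfl
      have hub' : u * b' = 0 := (hann u hu.1 b' hb'.1 hu0 hb'0).1
      have hzv : z' * v ∈ Ideal.span S := mulI _ _ (spanK_le_ideal S hv)
      have hbm : z' * b' = u * b' + w * b' := by rw [← hzeq, add_mul]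
      have h3 : z' * x = z' * v + (u * b' + w * b') := by
        rw [hxeq', mul_add, hbm]
      have hwb'I : w * b' ∈ Ideal.span S := by
        have h4 : w * b' = z' * x - z' * v := by rw [h3, hub', zero_add]; abel
        rw [h4]; exact sub_mem hz'x hzv
      have hwb'C : w * b' ∈ 𝒞 (n+1) := SetLike.mul_mem_graded hw.2 hb'.2
      obtain ⟨p, hp, q, hq, hpq⟩ := splitI 𝒞 SA SB S hS hann hsum hwb'I hwb'C (by omega)
      have hext := extract 𝒞 SA SB S hdisj (m := n+1) (by omega) (zero_mem _)
        ⟨SB.mul_mem hw.1 hb'.1, hwb'C⟩ hp hq (by rw [zero_add]; exact hpq)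
      have hq' : w * b' ∈ Submodule.span K (prodSet 𝒞 SB SA S n) := by
        have := hext.2 ▸ hq
        simpa using this
      have hwspan := sideA 𝒞 SB SA S hconn hS hannBA hsum1B hB hb'.1 hb'.2 hb'V hw.1 hq'
      have hwS' : w ∈ Ideal.span S' := by
        refine Ideal.span_mono ?_ hwspan
        rintro c ⟨hcB, hc1, hcb'⟩
        refine ⟨hc1, ?_⟩
        have : c * x = c * v + c * b' := by rw [hxeq', mul_add]
        rw [this]; exact add_mem (mulI _ _ (spanK_le_ideal S hv)) hcb'
      have huS' : u ∈ Ideal.span S' := by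
        have hadj : u ∈ Algebra.adjoin K ((SA : Set C) ∩ ((𝒞 1 : Submodule K C) : Set C)) := by
          rw [hAgen]; exact hu.1
        have h1 := genLem 𝒞 _ (fun c hc => hc.2) hadj hu0
        refine Ideal.span_mono ?_ h1
        rintro c ⟨hcA, hc1⟩
        refine ⟨hc1, ?_⟩
        have hcb0 : c * b' = 0 := (hann c hcA b' hb'.1 (zero_comp 𝒞 hc1 le_rfl) hb'0).1
        have : c * x = c * v + c * b' := by rw [hxeq', mul_add]
        rw [this, hcb0, add_zero]
        exact mulI _ _ (spanK_le_ideal S hv)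
      rw [← hzeq]; exact add_mem huS' hwS'
  -- case 3a: x = v + a' with a' pure A, not in VA
  have key3a : ∀ v a', v ∈ Submodule.span K S → a' ∈ Subalgebra.toSubmodule SA ⊓ 𝒞 1 →
      a' ∉ Vpart 𝒞 SA SB S → x = v + a' →
      ∀ n, 1 ≤ n → ∀ z' ∈ 𝒞 n, z' * x ∈ Ideal.span S → z' ∈ Ideal.span S' := by
    intro v a' hv ha' ha'V hxeq' n hn z' hz'n hz'x
    rcases eq_or_lt_of_le hn with h1 | h2
    · exact n1case z' (h1 ▸ hz'n) hz'x
    · obtain ⟨u, hu, w, hw, hzeq⟩ := Submodule.mem_sup.mp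
        (show z' ∈ _ ⊔ _ by rw [← hsum n hn]; exact hz'n)
      have hw0 := zero_comp 𝒞 hw.2 hn
      have ha'0 := zero_comp 𝒞 ha'.2 le_rfl
      have hwa' : w * a' = 0 := (hann a' ha'.1 w hw.1 ha'0 hw0).2
      have hzv : z' * v ∈ Ideal.span S := mulI _ _ (spanK_le_ideal S hv)
      have ham : z' * a' = u * a' + w * a' := by rw [← hzeq, add_mul]
      have h3 : z' * x = z' * v + (u * a' + w * a') := by
        rw [hxeq', mul_add, ham]
      have hua'I : u * a' ∈ Ideal.span S := by
        have h4 : u * a' = z' * x - z' * v := by rw [h3, hwa', add_zero]; abel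
        rw [h4]; exact sub_mem hz'x hzv
      have hua'C : u * a' ∈ 𝒞 (n+1) := SetLike.mul_mem_graded hu.2 ha'.2
      obtain ⟨p, hp, q, hq, hpq⟩ := splitI 𝒞 SA SB S hS hann hsum hua'I hua'C (by omega)
      have hext := extract 𝒞 SA SB S hdisj (m := n+1) (by omega)
        ⟨SA.mul_mem hu.1 ha'.1, hua'C⟩ (zero_mem _) hp hq (by rw [add_zero]; exact hpq)
      have hp' : u * a' ∈ Submodule.span K (prodSet 𝒞 SA SB S n) := by
        have := hext.1 ▸ hp
        simpa using this
      have huspan := sideA 𝒞 SA SB S hconn hS hann hsum1 hA ha'.1 ha'.2 ha'V hu.1 hp'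
      have huS' : u ∈ Ideal.span S' := by
        refine Ideal.span_mono ?_ huspan
        rintro c ⟨hcA, hc1, hca'⟩
        refine ⟨hc1, ?_⟩
        have : c * x = c * v + c * a' := by rw [hxeq', mul_add]
        rw [this]; exact add_mem (mulI _ _ (spanK_le_ideal S hv)) hca'
      have hwS' : w ∈ Ideal.span S' := by
        have hadj : w ∈ Algebra.adjoin K ((SB : Set C) ∩ ((𝒞 1 : Submodule K C) : Set C)) := by
          rw [hBgen]; exact hw.1
        have h1 := genLem 𝒞 _ (fun c hc => hc.2) hadj hw0
        refine Ideal.span_mono ?_ h1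
        rintro c ⟨hcB, hc1⟩
        refine ⟨hc1, ?_⟩
        have hca0 : c * a' = 0 := (hann a' ha'.1 c hcB ha'0 (zero_comp 𝒞 hc1 le_rfl)).2
        have : c * x = c * v + c * a' := by rw [hxeq', mul_add]
        rw [this, hca0, add_zero]
        exact mulI _ _ (spanK_le_ideal S hv)
      rw [← hzeq]; exact add_mem huS' hwS'
  -- case 1
  have key1 : xa ∉ Vpart 𝒞 SA SB S → xb ∉ Vpart 𝒞 SB SA S →
      ∀ n, 1 ≤ n → ∀ z' ∈ 𝒞 n, z' * x ∈ Ideal.span S → z' ∈ Ideal.span S' := by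
    intro hxaV hxbV n hn z' hz'n hz'x
    rcases eq_or_lt_of_le hn with h1 | h2
    · exact n1case z' (h1 ▸ hz'n) hz'x
    · obtain ⟨u, hu, w, hw, hzeq⟩ := Submodule.mem_sup.mp
        (show z' ∈ _ ⊔ _ by rw [← hsum n hn]; exact hz'n)
      have hu0 := zero_comp 𝒞 hu.2 hn
      have hw0 := zero_comp 𝒞 hw.2 hn
      have hxa0 := zero_comp 𝒞 hxa.2 le_rfl
      have hxb0 := zero_comp 𝒞 hxb.2 le_rfl
      have huxb : u * xb = 0 := (hann u hu.1 xb hxb.1 hu0 hxb0).1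
      have hwxa : w * xa = 0 := (hann xa hxa.1 w hw.1 hxa0 hw0).2
      have hzx : z' * x = u * xa + w * xb := by
        calc z' * x = (u + w) * (xa + xb) := by rw [hzeq, hxeq]
          _ = u * xa + u * xb + (w * xa + w * xb) := by rw [add_mul, mul_add, mul_add]
          _ = u * xa + w * xb := by rw [huxb, hwxa]; abel
      have hzxC : z' * x ∈ 𝒞 (n+1) := SetLike.mul_mem_graded hz'n hx1
      obtain ⟨p, hp, q, hq, hpq⟩ := splitI 𝒞 SA SB S hS hann hsum hz'x hzxC (by omega)
      have hext := extract 𝒞 SA SB S hdisj (m := n+1) (by omega)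
        ⟨SA.mul_mem hu.1 hxa.1, SetLike.mul_mem_graded hu.2 hxa.2⟩
        ⟨SB.mul_mem hw.1 hxb.1, SetLike.mul_mem_graded hw.2 hxb.2⟩ hp hq
        (by rw [← hzx]; exact hpq)
      have hp' : u * xa ∈ Submodule.span K (prodSet 𝒞 SA SB S n) := by
        have := hext.1 ▸ hp; simpa using this
      have hq' : w * xb ∈ Submodule.span K (prodSet 𝒞 SB SA S n) := by
        have := hext.2 ▸ hq; simpa using this
      have huspan := sideA 𝒞 SA SB S hconn hS hann hsum1 hA hxa.1 hxa.2 hxaV hu.1 hp'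
      have hwspan := sideA 𝒞 SB SA S hconn hS hannBA hsum1B hB hxb.1 hxb.2 hxbV hw.1 hq'
      have huS' : u ∈ Ideal.span S' := by
        refine Ideal.span_mono ?_ huspan
        rintro c ⟨hcA, hc1, hcxa⟩
        refine ⟨hc1, ?_⟩
        have hcxb : c * xb = 0 := (hann c hcA xb hxb.1 (zero_comp 𝒞 hc1 le_rfl) hxb0).1
        have : c * x = c * xa + c * xb := by rw [← hxeq, mul_add]
        rw [this, hcxb, add_zero]; exact hcxa
      have hwS' : w ∈ Ideal.span S' := by
        refine Ideal.span_mono ?_ hwspan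
        rintro c ⟨hcB, hc1, hcxb⟩
        refine ⟨hc1, ?_⟩
        have hcxa : c * xa = 0 := (hann xa hxa.1 c hcB hxa0 (zero_comp 𝒞 hc1 le_rfl)).2
        have : c * x = c * xa + c * xb := by rw [← hxeq, mul_add]
        rw [this, hcxa, zero_add]; exact hcxb
      rw [← hzeq]; exact add_mem huS' hwS'
  -- assemble the key from the case analysis
  have key : ∀ n, 1 ≤ n → ∀ z' ∈ 𝒞 n, z' * x ∈ Ideal.span S → z' ∈ Ideal.span S' := by
    by_cases hxaV : xa ∈ Vpart 𝒞 SA SB S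
    · obtain ⟨v, hv, b0, hb0, hvb⟩ := Submodule.mem_sup.mp hxaV.2
      have hb' : (b0 + xb) ∈ Subalgebra.toSubmodule SB ⊓ 𝒞 1 := add_mem hb0 hxb
      have hxeq2 : x = v + (b0 + xb) := by rw [← hxeq, ← hvb]; abel
      by_cases hb'V : (b0 + xb) ∈ Vpart 𝒞 SB SA S
      · obtain ⟨v2, hv2, a2, ha2, hv2a⟩ := Submodule.mem_sup.mp hb'V.2
        have ha2VA : a2 ∈ Vpart 𝒞 SA SB S := by
          refine ⟨ha2, Submodule.mem_sup.mpr ⟨-v2, neg_mem hv2, b0 + xb, hb', ?_⟩⟩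
          rw [← hv2a]; abel
        have hterm : x - a2 ∈ Ideal.span S := by
          have hx2 : x - a2 = v + v2 := by rw [hxeq2, ← hv2a]; abel
          rw [hx2]; exact spanK_le_ideal S (add_mem hv hv2)
        exact termKey a2 ha2VA hterm
      · exact key2a v (b0 + xb) hv hb' hb'V hxeq2
    · by_cases hxbV : xb ∈ Vpart 𝒞 SB SA S
      · obtain ⟨v2, hv2, a0, ha0, hva⟩ := Submodule.mem_sup.mp hxbV.2
        have ha' : (xa + a0) ∈ Subalgebra.toSubmodule SA ⊓ 𝒞 1 := add_mem hxa ha0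
        have hxeq2 : x = v2 + (xa + a0) := by rw [← hxeq, ← hva]; abel
        by_cases ha'V : (xa + a0) ∈ Vpart 𝒞 SA SB S
        · refine termKey (xa + a0) ha'V ?_
          have hx2 : x - (xa + a0) = v2 := by rw [hxeq2]; abel
          rw [hx2]; exact spanK_le_ideal S hv2
        · exact key3a v2 (xa + a0) hv2 ha' ha'V hxeq2
      · exact key1 hxaV hxbV
  -- conclude
  intro z hz
  have hzx : z * x ∈ Ideal.span S := (colon_mem z).mp hz
  rw [← DirectSum.sum_support_decompose 𝒞 z]
  refine Submodule.sum_mem _ fun n hn => ?_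
  have hznx : ((DirectSum.decompose 𝒞 z n : 𝒞 n) : C) * x ∈ Ideal.span S := by
    have h1 : ((DirectSum.decompose 𝒞 (z * x) (n+1) : 𝒞 (n+1)) : C)
        = ((DirectSum.decompose 𝒞 z n : 𝒞 n) : C) * x := by
      rw [DirectSum.coe_decompose_mul_of_right_mem_of_le 𝒞 hx1 (by omega : 1 ≤ n+1),
        Nat.add_sub_cancel]
    rw [← h1]; exact Igraded 𝒞 S hS hzx (n+1)
  rcases Nat.eq_zero_or_pos n with rfl | hn1
  · have h0 : ((DirectSum.decompose 𝒞 z 0 : 𝒞 0) : C) ∈ (1 : Submodule K C) :=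
      hconn ▸ SetLike.coe_mem _
    obtain ⟨r, hr⟩ := Submodule.mem_one.mp h0
    rcases eq_or_ne r 0 with rfl | hr0
    · rw [← hr, map_zero]; exact zero_mem _
    · exfalso; apply hxI
      have hx' : x = algebraMap K C r⁻¹ * (((DirectSum.decompose 𝒞 z 0 : 𝒞 0) : C) * x) := by
        rw [← hr, ← mul_assoc, ← map_mul, inv_mul_cancel₀ hr0, map_one, one_mul]
      rw [hx']
      exact mulI _ _ hznx
  · exact key n hn1 _ (SetLike.coe_mem _) hznx
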